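/- Let X be a compact metric space, θ: X → X a homeomorphism, and ψ0: X → GL(d,ℝ) continuous. Suppose the associated cocycle admits dominated splittings E¹ ⊕ F¹ of index p₁ and E² ⊕ F² of index p₂ with p₁ ≤ p₂. Then for every x ∈ X one has E²_x ⊆ E¹_x and F¹_x ⊆ F²_x. In particular, a dominated splitting of a given index is unique. -/

import Mathlib

noncomputable section

open scoped Matrix RealInnerProductSpace
open Filter Topology

namespace Paper

abbrev Euc (d : ℕ) : Type := EuclideanSpace ℝ (Fin d)

/-- The action of a `d × d` real matrix on Euclidean space. -/
def act {d : ℕ} (g : Matrix (Fin d) (Fin d) ℝ) (v : Euc d) : Euc d :=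
  Matrix.toEuclideanCLM (𝕜 := ℝ) g v

/-- The operator norm of a matrix acting on Euclidean space. -/
def opNorm {d : ℕ} (g : Matrix (Fin d) (Fin d) ℝ) : ℝ :=
  ‖(Matrix.toEuclideanCLM (𝕜 := ℝ) g : Euc d →L[ℝ] Euc d)‖

/-- The underlying matrix of an element of `GL (Fin d) ℝ`. -/
def mat {d : ℕ} (g : GL (Fin d) ℝ) : Matrix (Fin d) (Fin d) ℝ := ↑g

/-- The `p`-th singular value (`1`-indexed), via the min-max characterization:
`σ_p(g)` is the largest, over `p`-dimensional subspaces `P`, of the minimal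
stretch of unit vectors of `P`. -/
def sv {d : ℕ} (g : Matrix (Fin d) (Fin d) ℝ) (p : ℕ) : ℝ :=
  sSup { r | ∃ P : Submodule ℝ (Euc d), Module.finrank ℝ P = p ∧
      r = sInf { t | ∃ v ∈ P, ‖v‖ = 1 ∧ t = ‖act g v‖ } }

/-- `g` has a gap of index `p` if `σ_p(g) > σ_{p+1}(g)`. -/
def HasGap {d : ℕ} (g : Matrix (Fin d) (Fin d) ℝ) (p : ℕ) : Prop :=
  sv g (p + 1) < sv g p

/-- `U` is a Cartan attractor of index `p` for `g`: for some singular value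
decomposition `g = k·a·l` (`k`, `l` orthogonal, `a` diagonal with decreasing
nonnegative entries), `U` is the span of the first `p` columns of `k`. -/
def IsCartanAttractor {d : ℕ} (g : Matrix (Fin d) (Fin d) ℝ) (p : ℕ)
    (U : Submodule ℝ (Euc d)) : Prop :=
  ∃ k l : Matrix (Fin d) (Fin d) ℝ, ∃ σ : Fin d → ℝ,
    k ∈ Matrix.unitaryGroup (Fin d) ℝ ∧ l ∈ Matrix.unitaryGroup (Fin d) ℝ ∧
    (∀ i j : Fin d, i ≤ j → σ j ≤ σ i) ∧ (∀ i, 0 ≤ σ i) ∧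
    g = k * Matrix.diagonal σ * l ∧
    U = Submodule.span ℝ { x : Euc d | ∃ i : Fin d, (i : ℕ) < p ∧
          x = (EuclideanSpace.equiv (Fin d) ℝ).symm (fun j => k j i) }

/-- The Cartan attractor `U_p(g)`; when `g` has a gap of index `p` it is the
unique subspace satisfying `IsCartanAttractor g p`. -/
def cartanAttractor {d : ℕ} (g : Matrix (Fin d) (Fin d) ℝ) (p : ℕ) :
    Submodule ℝ (Euc d) :=
  letI := Classical.propDecidable (∃ U, IsCartanAttractor g p U)
  if h : ∃ U, IsCartanAttractor g p U then h.choose else ⊥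

/-- The angle `∠(P,Q)` between two subspaces: the infimum of angles between
nonzero vectors of `P` and `Q`. -/
def subAngle {d : ℕ} (P Q : Submodule ℝ (Euc d)) : ℝ :=
  sInf { θ | ∃ v ∈ P, v ≠ 0 ∧ ∃ w ∈ Q, w ≠ 0 ∧ θ = InnerProductGeometry.angle v w }

/-- `sin ∠(v,w)`. -/
def sinAngle {d : ℕ} (v w : Euc d) : ℝ := Real.sin (InnerProductGeometry.angle v w)

/-- The distance `d(P,Q) = max_{v ∈ P∖{0}} min_{w ∈ Q∖{0}} sin ∠(v,w)`. -/
def grassDist {d : ℕ} (P Q : Submodule ℝ (Euc d)) : ℝ :=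
  sSup { r | ∃ v ∈ P, v ≠ 0 ∧
      r = sInf { s | ∃ w ∈ Q, w ≠ 0 ∧ s = sinAngle v w } }

/-- The image `g·P` of a subspace under a matrix. -/
def mapMat {d : ℕ} (g : Matrix (Fin d) (Fin d) ℝ) (P : Submodule ℝ (Euc d)) :
    Submodule ℝ (Euc d) :=
  P.map ((Matrix.toEuclideanCLM (𝕜 := ℝ) g : Euc d →L[ℝ] Euc d) : Euc d →ₗ[ℝ] Euc d)

/-- `m(g|_W)`, the minimal stretch of unit vectors of `W` under `g`. -/
def minRestrict {d : ℕ} (g : Matrix (Fin d) (Fin d) ℝ) (W : Submodule ℝ (Euc d)) : ℝ :=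
  sInf { t | ∃ v ∈ W, ‖v‖ = 1 ∧ t = ‖act g v‖ }

/-- `‖g|_W‖`, the maximal stretch of unit vectors of `W` under `g`. -/
def normRestrict {d : ℕ} (g : Matrix (Fin d) (Fin d) ℝ) (W : Submodule ℝ (Euc d)) : ℝ :=
  sSup { t | ∃ v ∈ W, ‖v‖ = 1 ∧ t = ‖act g v‖ }


/-- The cocycle `ψ^n_x = ψ0(θ^{n-1} x) ⋯ ψ0(θ x) · ψ0(x)`. -/
def cocyc {X : Type*} [TopologicalSpace X] {d : ℕ} (θ : X ≃ₜ X) (ψ0 : X → GL (Fin d) ℝ) :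
    ℕ → X → GL (Fin d) ℝ
  | 0, _ => 1
  | n + 1, x => ψ0 ((θ : X → X)^[n] x) * cocyc θ ψ0 n x

/-- A dominated splitting of index `p` for the cocycle over `θ` defined by `ψ0`:
an equivariant decomposition `ℝ^d = E_x ⊕ F_x` with `dim F_x = p` along which
`F` uniformly exponentially dominates `E`. -/
def IsDominatedSplitting {X : Type*} [TopologicalSpace X] {d : ℕ}
    (θ : X ≃ₜ X) (ψ0 : X → GL (Fin d) ℝ) (p : ℕ)
    (Ef Ff : X → Submodule ℝ (Euc d)) : Prop :=
  (∀ x, Module.finrank ℝ (Ff x) = p) ∧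
  (∀ x, IsCompl (Ef x) (Ff x)) ∧
  (∀ x, mapMat (mat (ψ0 x)) (Ef x) = Ef (θ x)) ∧
  (∀ x, mapMat (mat (ψ0 x)) (Ff x) = Ff (θ x)) ∧
  ∃ c > (0 : ℝ), ∃ μ > (0 : ℝ), ∀ x : X, ∀ n : ℕ,
    ∀ u ∈ Ef x, u ≠ 0 → ∀ w ∈ Ff x, w ≠ 0 →
      ‖act (mat (cocyc θ ψ0 n x)) u‖ / ‖u‖ ≤
        c * Real.exp (-μ * (n : ℝ)) * (‖act (mat (cocyc θ ψ0 n x)) w‖ / ‖w‖)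

section Aux

variable {d : ℕ}

lemma act_mul (g h : Matrix (Fin d) (Fin d) ℝ) (v : Euc d) : act (g*h) v = act g (act h v) := by
  simp [act, map_mul]

lemma act_one (v : Euc d) : act (1 : Matrix (Fin d) (Fin d) ℝ) v = v := by simp [act]

lemma act_add (g : Matrix (Fin d) (Fin d) ℝ) (u v : Euc d) : act g (u+v) = act g u + act g v := by
  simp [act]

lemma act_zero (g : Matrix (Fin d) (Fin d) ℝ) : act g (0 : Euc d) = 0 := by simp [act]

lemma mat_mul (g h : GL (Fin d) ℝ) : mat (g*h) = mat g * mat h := rfl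

lemma mat_one : mat (1 : GL (Fin d) ℝ) = 1 := rfl

lemma act_inv_act (g : GL (Fin d) ℝ) (v : Euc d) : act (mat g⁻¹) (act (mat g) v) = v := by
  rw [← act_mul, ← mat_mul, inv_mul_cancel, mat_one, act_one]

lemma act_act_inv (g : GL (Fin d) ℝ) (v : Euc d) : act (mat g) (act (mat g⁻¹) v) = v := by
  rw [← act_mul, ← mat_mul, mul_inv_cancel, mat_one, act_one]

lemma act_ne_zero (g : GL (Fin d) ℝ) {v : Euc d} (hv : v ≠ 0) : act (mat g) v ≠ 0 := by
  intro h
  apply hv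
  have h2 := act_inv_act g v
  rw [h, act_zero] at h2
  exact h2.symm

lemma act_inv_ne_zero (g : GL (Fin d) ℝ) {v : Euc d} (hv : v ≠ 0) : act (mat g⁻¹) v ≠ 0 := by
  intro h
  apply hv
  have h2 := act_act_inv g v
  rw [h, act_zero] at h2
  exact h2.symm

lemma mapMat_mul (g h : Matrix (Fin d) (Fin d) ℝ) (P : Submodule ℝ (Euc d)) :
    mapMat (g*h) P = mapMat g (mapMat h P) := by
  simp [mapMat, map_mul, ← Submodule.map_comp]
  rfl

lemma mapMat_one (P : Submodule ℝ (Euc d)) : mapMat (1 : Matrix (Fin d) (Fin d) ℝ) P = P := by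
  simp [mapMat]
  exact Submodule.map_id P

lemma ev_small (c μ ε : ℝ) (hμ : 0 < μ) (hε : 0 < ε) :
    ∀ᶠ n : ℕ in Filter.atTop, c * Real.exp (-μ * n) < ε := by
  have h0 : Filter.Tendsto (fun n : ℕ => c * Real.exp (-μ * n)) Filter.atTop (nhds 0) := by
    have h1 : Filter.Tendsto (fun n : ℕ => Real.exp (-μ) ^ n) Filter.atTop (nhds 0) :=
      tendsto_pow_atTop_nhds_zero_of_lt_one (Real.exp_nonneg _)
        (Real.exp_lt_one_iff.mpr (by linarith))
    have h2 : (fun n : ℕ => c * Real.exp (-μ * n)) = fun n : ℕ => c * Real.exp (-μ) ^ n := by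
      funext n
      rw [← Real.exp_nat_mul, mul_comm (n : ℝ) (-μ)]
    rw [h2]
    simpa using h1.const_mul c
  exact h0.eventually_lt_const hε

lemma dom_mul {A B a b k : ℝ} (ha : 0 < a) (hb : 0 < b) (h : A / a ≤ k * (B / b)) :
    A * b ≤ k * B * a := by
  rw [show k * (B / b) = (k * B) / b by ring] at h
  rw [div_le_div_iff₀ ha hb] at h
  exact h

variable {X : Type*} [TopologicalSpace X]

lemma cocyc_succ (θ : X ≃ₜ X) (ψ0 : X → GL (Fin d) ℝ) (n : ℕ) (x : X) :
    cocyc θ ψ0 (n+1) x = ψ0 ((θ : X → X)^[n] x) * cocyc θ ψ0 n x := rfl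

lemma mapMat_cocyc (θ : X ≃ₜ X) (ψ0 : X → GL (Fin d) ℝ) {Ef : X → Submodule ℝ (Euc d)}
    (hEf : ∀ x, mapMat (mat (ψ0 x)) (Ef x) = Ef (θ x)) (n : ℕ) (x : X) :
    mapMat (mat (cocyc θ ψ0 n x)) (Ef x) = Ef ((θ : X → X)^[n] x) := by
  induction n with
  | zero => simp [cocyc, mat_one, mapMat_one]
  | succ n ih =>
    rw [cocyc_succ, mat_mul, mapMat_mul, ih, hEf, Function.iterate_succ_apply']

lemma pre_mem (θ : X ≃ₜ X) (ψ0 : X → GL (Fin d) ℝ) {Ef : X → Submodule ℝ (Euc d)}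
    (hEf : ∀ x, mapMat (mat (ψ0 x)) (Ef x) = Ef (θ x)) (n : ℕ) (x : X) {z : Euc d}
    (hz : z ∈ Ef x) :
    act (mat (cocyc θ ψ0 n ((θ.symm : X → X)^[n] x))⁻¹) z ∈ Ef ((θ.symm : X → X)^[n] x) := by
  set y := (θ.symm : X → X)^[n] x with hy
  have hyx : (θ : X → X)^[n] y = x := by
    have hli : Function.LeftInverse (θ : X → X) (θ.symm : X → X) := θ.apply_symm_apply
    exact (hli.iterate n) x
  have hmap := mapMat_cocyc θ ψ0 hEf n y
  rw [hyx] at hmap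
  rw [← hmap] at hz
  obtain ⟨z', hz', hz'eq⟩ := Submodule.mem_map.mp hz
  have heq : act (mat (cocyc θ ψ0 n y)) z' = z := by simpa [act] using hz'eq
  have h2 : act (mat (cocyc θ ψ0 n y)⁻¹) z = z' := by
    rw [← heq, act_inv_act]
  rw [h2]
  exact hz'

end Aux

lemma key {X : Type*} [TopologicalSpace X] {d : ℕ}
    (θ : X ≃ₜ X) (ψ0 : X → GL (Fin d) ℝ)
    {p₁ p₂ : ℕ} (hp : p₁ ≤ p₂)
    {E1 F1 E2 F2 : X → Submodule ℝ (Euc d)}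
    (h1 : IsDominatedSplitting θ ψ0 p₁ E1 F1)
    (h2 : IsDominatedSplitting θ ψ0 p₂ E2 F2) :
    ∀ x, E2 x ≤ E1 x ∧ F1 x ≤ F2 x := by
  obtain ⟨hr1, hcp1, hE1, hF1, c₁, hc₁, μ₁, hμ₁, hd1⟩ := h1
  obtain ⟨hr2, hcp2, hE2, hF2, c₂, hc₂, μ₂, hμ₂, hd2⟩ := h2
  -- Claim A : F1 x ∩ E2 x = 0
  have claimA : ∀ x, ∀ u, u ∈ F1 x → u ∈ E2 x → u = 0 := by
    intro x u huF1 huE2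
    by_contra hu0
    have hup : 0 < ‖u‖ := norm_pos_iff.mpr hu0
    by_cases hzex : ∃ z, z ∈ E1 x ∧ z ∈ F2 x ∧ z ≠ 0
    · obtain ⟨z, hzE, hzF, hz0⟩ := hzex
      obtain ⟨n, hn⟩ := (ev_small (c₁*c₂) (μ₁+μ₂) 1 (by linarith) one_pos).exists
      have d1 := hd1 x n z hzE hz0 u huF1 hu0
      have d2 := hd2 x n u huE2 hu0 z hzF hz0
      set ψ := mat (cocyc θ ψ0 n x) with hψ
      have hzp : 0 < ‖z‖ := norm_pos_iff.mpr hz0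
      have hψz : 0 < ‖act ψ z‖ := norm_pos_iff.mpr (act_ne_zero _ hz0)
      have hψu : 0 < ‖act ψ u‖ := norm_pos_iff.mpr (act_ne_zero _ hu0)
      have hA : 0 < ‖act ψ z‖/‖z‖ := div_pos hψz hzp
      have e1p : (0:ℝ) < Real.exp (-μ₁ * n) := Real.exp_pos _
      have e2p : (0:ℝ) < Real.exp (-μ₂ * n) := Real.exp_pos _
      have hprod : Real.exp (-(μ₁+μ₂) * (n:ℝ)) = Real.exp (-μ₁*n) * Real.exp (-μ₂*n) := by
        rw [← Real.exp_add]; ring_nf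
      have step : ‖act ψ z‖/‖z‖ ≤
          (c₁ * Real.exp (-μ₁*n)) * ((c₂ * Real.exp (-μ₂*n)) * (‖act ψ z‖/‖z‖)) := by
        calc ‖act ψ z‖/‖z‖ ≤ c₁ * Real.exp (-μ₁*n) * (‖act ψ u‖/‖u‖) := d1
        _ ≤ _ := by
          apply mul_le_mul_of_nonneg_left d2 (by positivity)
      rw [hprod] at hn
      nlinarith [step, hA, hn, mul_pos (mul_pos hc₁ e1p) (mul_pos hc₂ e2p)]
    · push_neg at hzex
      have hdisj : Disjoint (E1 x) (F2 x) := by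
        rw [Submodule.disjoint_def]
        intro z h1z h2z
        exact hzex z h1z h2z
      have hfr : Module.finrank ℝ (E1 x ⊔ F2 x : Submodule ℝ (Euc d)) =
          Module.finrank ℝ (E1 x) + p₂ := by
        have h := Submodule.finrank_sup_add_finrank_inf_eq (E1 x) (F2 x)
        rw [hdisj.eq_bot, hr2 x] at h
        simpa using h
      have hE1d : Module.finrank ℝ (E1 x) + p₁ = d := by
        have h := Submodule.finrank_add_eq_of_isCompl (hcp1 x)
        rw [hr1 x] at h
        simpa [finrank_euclideanSpace_fin] using h
      have hle : Module.finrank ℝ (E1 x ⊔ F2 x : Submodule ℝ (Euc d)) ≤ d := by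
        have := Submodule.finrank_le (E1 x ⊔ F2 x)
        simpa [finrank_euclideanSpace_fin] using this
      have htop : E1 x ⊔ F2 x = ⊤ := by
        apply Submodule.eq_top_of_finrank_eq
        rw [finrank_euclideanSpace_fin]
        omega
      have humem : u ∈ E1 x ⊔ F2 x := htop ▸ Submodule.mem_top
      obtain ⟨e₀, he₀, f, hf, hef⟩ := Submodule.mem_sup.mp humem
      have hf0 : f ≠ 0 := by
        intro h
        rw [h, add_zero] at hef
        have huE1 : u ∈ E1 x := hef ▸ he₀
        exact hu0 ((Submodule.mem_bot ℝ).mp ((hcp1 x).disjoint.le_bot (Submodule.mem_inf.mpr ⟨huE1, huF1⟩)))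
      have hfp : 0 < ‖f‖ := norm_pos_iff.mpr hf0
      obtain ⟨n, s1, s2⟩ := ((ev_small (c₁*‖e₀‖) μ₁ (‖u‖) hμ₁ hup).and
        (ev_small (c₂*(2*‖u‖)) μ₂ (‖f‖) hμ₂ hfp)).exists
      set ψ := mat (cocyc θ ψ0 n x) with hψ
      set e₁ := Real.exp (-μ₁ * (n:ℝ)) with he₁
      set e₂ := Real.exp (-μ₂ * (n:ℝ)) with he₂
      have e1p : (0:ℝ) < e₁ := Real.exp_pos _
      have e2p : (0:ℝ) < e₂ := Real.exp_pos _
      have hψu : 0 < ‖act ψ u‖ := norm_pos_iff.mpr (act_ne_zero _ hu0)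
      have B1 : ‖act ψ e₀‖ * ‖u‖ ≤ c₁ * e₁ * ‖act ψ u‖ * ‖e₀‖ := by
        by_cases he00 : e₀ = 0
        · simp [he00, act_zero]
        · have he0p : 0 < ‖e₀‖ := norm_pos_iff.mpr he00
          exact dom_mul he0p hup (hd1 x n e₀ he₀ he00 u huF1 hu0)
      have B2 : ‖act ψ u‖ * ‖f‖ ≤ c₂ * e₂ * ‖act ψ f‖ * ‖u‖ :=
        dom_mul hup hfp (hd2 x n u huE2 hu0 f hf hf0)
      have hfu : f = u - e₀ := by rw [← hef]; abel
      have T : ‖act ψ f‖ ≤ ‖act ψ u‖ + ‖act ψ e₀‖ := by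
        rw [hfu]
        have : act ψ (u - e₀) = act ψ u - act ψ e₀ := by simp [act]
        rw [this]
        exact norm_sub_le _ _
      -- step1 : ‖act ψ e₀‖ ≤ ‖act ψ u‖
      have step1 : ‖act ψ e₀‖ ≤ ‖act ψ u‖ := by
        have hc : ‖u‖ * ‖act ψ e₀‖ ≤ ‖u‖ * ‖act ψ u‖ := by
          calc ‖u‖ * ‖act ψ e₀‖ = ‖act ψ e₀‖ * ‖u‖ := by ring
          _ ≤ c₁ * e₁ * ‖act ψ u‖ * ‖e₀‖ := B1
          _ = (c₁ * ‖e₀‖ * e₁) * ‖act ψ u‖ := by ring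
          _ ≤ ‖u‖ * ‖act ψ u‖ := mul_le_mul_of_nonneg_right s1.le (norm_nonneg _)
        exact le_of_mul_le_mul_left hc hup
      have step2 : ‖act ψ f‖ ≤ 2 * ‖act ψ u‖ := by linarith
      have step3 : ‖act ψ u‖ * ‖f‖ < ‖f‖ * ‖act ψ u‖ := by
        calc ‖act ψ u‖ * ‖f‖ ≤ c₂ * e₂ * ‖act ψ f‖ * ‖u‖ := B2
        _ ≤ c₂ * e₂ * (2 * ‖act ψ u‖) * ‖u‖ := by
          apply mul_le_mul_of_nonneg_right _ (norm_nonneg u)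
          exact mul_le_mul_of_nonneg_left step2 (by positivity)
        _ = (c₂ * (2 * ‖u‖) * e₂) * ‖act ψ u‖ := by ring
        _ < ‖f‖ * ‖act ψ u‖ := mul_lt_mul_of_pos_right s2 hψu
      have : ‖f‖ * ‖act ψ u‖ = ‖act ψ u‖ * ‖f‖ := mul_comm _ _
      linarith
  -- Claim B : F1 x ≤ F2 x
  have claimB : ∀ x, F1 x ≤ F2 x := by
    intro x w hwF1
    by_cases hw0 : w = 0
    · rw [hw0]; exact (F2 x).zero_mem
    obtain ⟨u, v, huE2, hvF2, huv⟩ := Submodule.codisjoint_iff_exists_add_eq.mp (hcp2 x).codisjoint w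
    suffices hu : u = 0 by
      rw [← huv, hu, zero_add]; exact hvF2
    by_contra hu0
    have hup : 0 < ‖u‖ := norm_pos_iff.mpr hu0
    have hwp : 0 < ‖w‖ := norm_pos_iff.mpr hw0
    have hv0 : v ≠ 0 := by
      intro h
      rw [h, add_zero] at huv
      exact hu0 (claimA x u (huv ▸ hwF1) huE2)
    have hvp : 0 < ‖v‖ := norm_pos_iff.mpr hv0
    obtain ⟨a, b, haE1, hbF1, hab⟩ := Submodule.codisjoint_iff_exists_add_eq.mp (hcp1 x).codisjoint u
    have ha0 : a ≠ 0 := by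
      intro h
      rw [h, zero_add] at hab
      exact hu0 (claimA x u (hab ▸ hbF1) huE2)
    have hap : 0 < ‖a‖ := norm_pos_iff.mpr ha0
    obtain ⟨n, ⟨s1, s2⟩, s3⟩ :=
      (((ev_small (c₁*‖b‖) μ₁ (‖a‖/4) hμ₁ (by linarith)).and
        (ev_small (c₂*‖v‖) μ₂ (‖u‖/4) hμ₂ (by linarith))).and
        (ev_small (c₁*‖w‖) μ₁ (‖a‖/16) hμ₁ (by linarith))).exists
    set y := (θ.symm : X → X)^[n] x with hy
    set g := cocyc θ ψ0 n y with hg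
    set a' := act (mat g⁻¹) a with ha'
    set b' := act (mat g⁻¹) b with hb'
    set u' := act (mat g⁻¹) u with hu'
    set v' := act (mat g⁻¹) v with hv'
    set w' := act (mat g⁻¹) w with hw'
    have ha'E : a' ∈ E1 y := pre_mem θ ψ0 hE1 n x haE1
    have hb'F : b' ∈ F1 y := pre_mem θ ψ0 hF1 n x hbF1
    have hu'E : u' ∈ E2 y := pre_mem θ ψ0 hE2 n x huE2
    have hv'F : v' ∈ F2 y := pre_mem θ ψ0 hF2 n x hvF2
    have hw'F : w' ∈ F1 y := pre_mem θ ψ0 hF1 n x hwF1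
    have ha'0 : a' ≠ 0 := act_inv_ne_zero _ ha0
    have hu'0 : u' ≠ 0 := act_inv_ne_zero _ hu0
    have hv'0 : v' ≠ 0 := act_inv_ne_zero _ hv0
    have hw'0 : w' ≠ 0 := act_inv_ne_zero _ hw0
    have ha'p : 0 < ‖a'‖ := norm_pos_iff.mpr ha'0
    have hu'p : 0 < ‖u'‖ := norm_pos_iff.mpr hu'0
    have hv'p : 0 < ‖v'‖ := norm_pos_iff.mpr hv'0
    have hw'p : 0 < ‖w'‖ := norm_pos_iff.mpr hw'0
    set e₁ := Real.exp (-μ₁ * (n:ℝ)) with he₁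
    set e₂ := Real.exp (-μ₂ * (n:ℝ)) with he₂
    have hfa : act (mat g) a' = a := act_act_inv _ _
    have hfb : act (mat g) b' = b := act_act_inv _ _
    have hfu : act (mat g) u' = u := act_act_inv _ _
    have hfv : act (mat g) v' = v := act_act_inv _ _
    have hfw : act (mat g) w' = w := act_act_inv _ _
    have B1 : ‖a‖ * ‖b'‖ ≤ c₁ * e₁ * ‖b‖ * ‖a'‖ := by
      by_cases hbz : b = 0
      · simp only [hbz, hb', act_zero, norm_zero, mul_zero]
        positivity
      · have hb'0 : b' ≠ 0 := act_inv_ne_zero _ hbz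
        have h := hd1 y n a' ha'E ha'0 b' hb'F hb'0
        rw [hfa, hfb] at h
        exact dom_mul ha'p (norm_pos_iff.mpr hb'0) h
    have B2 : ‖u‖ * ‖v'‖ ≤ c₂ * e₂ * ‖v‖ * ‖u'‖ := by
      have h := hd2 y n u' hu'E hu'0 v' hv'F hv'0
      rw [hfu, hfv] at h
      exact dom_mul hu'p hv'p h
    have B3 : ‖a‖ * ‖w'‖ ≤ c₁ * e₁ * ‖w‖ * ‖a'‖ := by
      have h := hd1 y n a' ha'E ha'0 w' hw'F hw'0
      rw [hfa, hfw] at h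
      exact dom_mul ha'p hw'p h
    have hsum1 : u' = a' + b' := by rw [hu', ← hab, act_add]
    have hsum2 : w' = u' + v' := by rw [hw', ← huv, act_add]
    have T1 : ‖a'‖ ≤ ‖u'‖ + ‖b'‖ := by
      have h : a' = u' - b' := by rw [hsum1]; abel
      rw [h]; exact norm_sub_le _ _
    have T2 : ‖u'‖ ≤ ‖w'‖ + ‖v'‖ := by
      have h : u' = w' - v' := by rw [hsum2]; abel
      rw [h]; exact norm_sub_le _ _
    have hb'le : ‖b'‖ ≤ ‖a'‖/4 := by
      have hc : ‖a‖ * ‖b'‖ ≤ ‖a‖ * (‖a'‖/4) := by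
        calc ‖a‖ * ‖b'‖ ≤ c₁ * e₁ * ‖b‖ * ‖a'‖ := B1
        _ = (c₁ * ‖b‖ * e₁) * ‖a'‖ := by ring
        _ ≤ (‖a‖/4) * ‖a'‖ := mul_le_mul_of_nonneg_right s1.le (norm_nonneg _)
        _ = ‖a‖ * (‖a'‖/4) := by ring
      exact le_of_mul_le_mul_left hc hap
    have hv'le : ‖v'‖ ≤ ‖u'‖/4 := by
      have hc : ‖u‖ * ‖v'‖ ≤ ‖u‖ * (‖u'‖/4) := by
        calc ‖u‖ * ‖v'‖ ≤ c₂ * e₂ * ‖v‖ * ‖u'‖ := B2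
        _ = (c₂ * ‖v‖ * e₂) * ‖u'‖ := by ring
        _ ≤ (‖u‖/4) * ‖u'‖ := mul_le_mul_of_nonneg_right s2.le (norm_nonneg _)
        _ = ‖u‖ * (‖u'‖/4) := by ring
      exact le_of_mul_le_mul_left hc hup
    have hw'le : ‖w'‖ ≤ ‖a'‖/16 := by
      have hc : ‖a‖ * ‖w'‖ ≤ ‖a‖ * (‖a'‖/16) := by
        calc ‖a‖ * ‖w'‖ ≤ c₁ * e₁ * ‖w‖ * ‖a'‖ := B3
        _ = (c₁ * ‖w‖ * e₁) * ‖a'‖ := by ring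
        _ ≤ (‖a‖/16) * ‖a'‖ := mul_le_mul_of_nonneg_right s3.le (norm_nonneg _)
        _ = ‖a‖ * (‖a'‖/16) := by ring
      exact le_of_mul_le_mul_left hc hap
    linarith
  -- Claim C : E2 x ≤ E1 x
  have claimC : ∀ x, E2 x ≤ E1 x := by
    intro x u huE2
    obtain ⟨a, b, haE1, hbF1, hab⟩ := Submodule.codisjoint_iff_exists_add_eq.mp (hcp1 x).codisjoint u
    suffices hb : b = 0 by
      rw [← hab, hb, add_zero]; exact haE1
    by_contra hb0
    have hbp : 0 < ‖b‖ := norm_pos_iff.mpr hb0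
    have hu0 : u ≠ 0 := by
      intro h
      rw [h] at hab
      have hbE1 : b ∈ E1 x := by
        have : b = -a := by rw [← neg_eq_of_add_eq_zero_right hab]  -- a + b = 0 → b = -a
        rw [this]; exact (E1 x).neg_mem haE1
      exact hb0 ((Submodule.mem_bot ℝ).mp ((hcp1 x).disjoint.le_bot (Submodule.mem_inf.mpr ⟨hbE1, hbF1⟩)))
    have hup : 0 < ‖u‖ := norm_pos_iff.mpr hu0
    have hbF2 : b ∈ F2 x := claimB x hbF1
    obtain ⟨n, s1, s2⟩ := ((ev_small (c₁*‖a‖) μ₁ (‖b‖/4) hμ₁ (by linarith)).and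
      (ev_small (c₂*‖u‖) μ₂ (‖b‖/4) hμ₂ (by linarith))).exists
    set ψ := mat (cocyc θ ψ0 n x) with hψ
    set e₁ := Real.exp (-μ₁ * (n:ℝ)) with he₁
    set e₂ := Real.exp (-μ₂ * (n:ℝ)) with he₂
    have hψb : 0 < ‖act ψ b‖ := norm_pos_iff.mpr (act_ne_zero _ hb0)
    have B1 : ‖act ψ a‖ * ‖b‖ ≤ c₁ * e₁ * ‖act ψ b‖ * ‖a‖ := by
      by_cases haz : a = 0
      · simp [haz, act_zero]
      · exact dom_mul (norm_pos_iff.mpr haz) hbp (hd1 x n a haE1 haz b hbF1 hb0)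
    have B2 : ‖act ψ u‖ * ‖b‖ ≤ c₂ * e₂ * ‖act ψ b‖ * ‖u‖ :=
      dom_mul hup hbp (hd2 x n u huE2 hu0 b hbF2 hb0)
    have T : ‖act ψ b‖ ≤ ‖act ψ u‖ + ‖act ψ a‖ := by
      have h : b = u - a := by rw [← hab]; abel
      rw [h]
      have : act ψ (u - a) = act ψ u - act ψ a := by simp [act]
      rw [this]
      exact norm_sub_le _ _
    have hstep1 : ‖act ψ a‖ ≤ ‖act ψ b‖/4 := by
      have hc : ‖b‖ * ‖act ψ a‖ ≤ ‖b‖ * (‖act ψ b‖/4) := by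
        calc ‖b‖ * ‖act ψ a‖ = ‖act ψ a‖ * ‖b‖ := by ring
        _ ≤ c₁ * e₁ * ‖act ψ b‖ * ‖a‖ := B1
        _ = (c₁ * ‖a‖ * e₁) * ‖act ψ b‖ := by ring
        _ ≤ (‖b‖/4) * ‖act ψ b‖ := mul_le_mul_of_nonneg_right s1.le (norm_nonneg _)
        _ = ‖b‖ * (‖act ψ b‖/4) := by ring
      exact le_of_mul_le_mul_left hc hbp
    have hstep2 : ‖act ψ u‖ ≤ ‖act ψ b‖/4 := by
      have hc : ‖b‖ * ‖act ψ u‖ ≤ ‖b‖ * (‖act ψ b‖/4) := by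
        calc ‖b‖ * ‖act ψ u‖ = ‖act ψ u‖ * ‖b‖ := by ring
        _ ≤ c₂ * e₂ * ‖act ψ b‖ * ‖u‖ := B2
        _ = (c₂ * ‖u‖ * e₂) * ‖act ψ b‖ := by ring
        _ ≤ (‖b‖/4) * ‖act ψ b‖ := mul_le_mul_of_nonneg_right s2.le (norm_nonneg _)
        _ = ‖b‖ * (‖act ψ b‖/4) := by ring
      exact le_of_mul_le_mul_left hc hbp
    linarith
  exact fun x => ⟨claimC x, claimB x⟩


/-- Proposition 2.2/2.5 of [CP]: compatibility and uniqueness of dominated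
splittings. -/
theorem stmt18 {X : Type*} [MetricSpace X] [CompactSpace X] {d : ℕ}
    (θ : X ≃ₜ X) (ψ0 : X → GL (Fin d) ℝ) (hψ : Continuous ψ0)
    (p₁ p₂ : ℕ) (hp : p₁ ≤ p₂)
    (E1 F1 E2 F2 : X → Submodule ℝ (Euc d))
    (h1 : IsDominatedSplitting θ ψ0 p₁ E1 F1)
    (h2 : IsDominatedSplitting θ ψ0 p₂ E2 F2) :
    (∀ x, E2 x ≤ E1 x ∧ F1 x ≤ F2 x) ∧
    (p₁ = p₂ → ∀ x, E1 x = E2 x ∧ F1 x = F2 x) := by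
  constructor
  · exact key θ ψ0 hp h1 h2
  · intro hpe x
    have k1 := key θ ψ0 hp h1 h2 x
    have k2 := key θ ψ0 (le_of_eq hpe.symm) h2 h1 x
    exact ⟨le_antisymm k2.1 k1.1, le_antisymm k1.2 k2.2⟩

end Paper
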